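/- Let R be a commutative ring, 𝔗 a torsion theory over R, 𝔞 a finitely generated ideal of R, and M an R-module with M ∈ 𝔗. Then Ext¹_R(R/𝔞, M) ∈ 𝔗. -/

import Mathlib

open CategoryTheory

universe u

noncomputable section

/-- A torsion theory over `R`: a class of `R`-modules closed under isomorphism, submodules,
quotient modules, extensions, and directed colimits (formulated as closure under directed
unions of submodules). -/
structure IsTorsionTheory (R : Type u) [CommRing R] (T : Set (ModuleCat.{u} R)) : Prop where
  mem_of_iso : ∀ {N N' : ModuleCat.{u} R}, (N ≅ N') → N ∈ T → N' ∈ T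
  submodule_mem : ∀ {N : ModuleCat.{u} R}, N ∈ T → ∀ S : Submodule R N,
    ModuleCat.of R S ∈ T
  quotient_mem : ∀ {N : ModuleCat.{u} R}, N ∈ T → ∀ S : Submodule R N,
    ModuleCat.of R (N ⧸ S) ∈ T
  ext_mem : ∀ {N : ModuleCat.{u} R} (S : Submodule R N),
    ModuleCat.of R S ∈ T → ModuleCat.of R (N ⧸ S) ∈ T → N ∈ T
  directed_mem : ∀ {N : ModuleCat.{u} R} {ι : Type u} [Nonempty ι] (S : ι → Submodule R N),
    Directed (· ≤ ·) S → (∀ i, ModuleCat.of R (S i) ∈ T) → iSup S = ⊤ → N ∈ T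

variable {R : Type u} [CommRing R]

section Resolution

open CategoryTheory Limits Projective

variable {C : Type*} [Category C] [Abelian C] [EnoughProjectives C]

/-- Auxiliary complex: a chain complex starting with two prescribed objects/differential,
continued by syzygies. -/
def TTofComplex (P₀ P₁ : C) (d₁ : P₁ ⟶ P₀) : ChainComplex C ℕ :=
  ChainComplex.mk' P₀ P₁ d₁ (fun f => ⟨_, Projective.d f, by exact (Category.assoc _ _ _).trans (by rw [kernel.condition]; exact comp_zero)⟩)

lemma TTofComplex_d_1_0 (P₀ P₁ : C) (d₁ : P₁ ⟶ P₀) :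
    (TTofComplex P₀ P₁ d₁).d 1 0 = d₁ := by
  simp [TTofComplex]

lemma TTofComplex_exactAt_succ (P₀ P₁ : C) (d₁ : P₁ ⟶ P₀) (n : ℕ) :
    (TTofComplex P₀ P₁ d₁).ExactAt (n + 1) := by
  rw [HomologicalComplex.exactAt_iff' _ (n + 1 + 1) (n + 1) n (by simp) (by simp)]
  unfold TTofComplex
  have h := exact_d_f ((ChainComplex.mk' P₀ P₁ d₁ (fun f => ⟨_, Projective.d f,
    by exact (Category.assoc _ _ _).trans (by rw [kernel.condition]; exact comp_zero)⟩)).d (n + 1) n)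
  refine (ShortComplex.exact_iff_of_iso ?_).2 h
  refine ShortComplex.isoMk (ChainComplex.mk'XIso P₀ P₁ d₁ (fun f => ⟨_, Projective.d f,
    by exact (Category.assoc _ _ _).trans (by rw [kernel.condition]; exact comp_zero)⟩) n) (Iso.refl _) (Iso.refl _) ?_ ?_
  · exact (ChainComplex.mk'_d _ _ _ _ n).symm.trans (Category.comp_id _).symm
  · exact (Category.id_comp _).trans (Category.comp_id _).symm

instance TTofComplex_projective (P₀ P₁ : C) [Projective P₀] [Projective P₁] (d₁ : P₁ ⟶ P₀)
    (n : ℕ) : Projective ((TTofComplex P₀ P₁ d₁).X n) := by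
  obtain (_ | _ | _ | n) := n
  · exact ‹Projective P₀›
  · exact ‹Projective P₁›
  · apply Projective.projective_over
  · apply Projective.projective_over

/-- A projective resolution from prescribed first steps. -/
def TTresolution {Z P₀ P₁ : C} [Projective P₀] [Projective P₁] (π : P₀ ⟶ Z) [Epi π]
    (d₁ : P₁ ⟶ P₀) (w : d₁ ≫ π = 0) (hex : (ShortComplex.mk d₁ π w).Exact) :
    ProjectiveResolution Z where
  complex := TTofComplex P₀ P₁ d₁
  π := (ChainComplex.toSingle₀Equiv _ _).symm ⟨π, by
        rw [TTofComplex_d_1_0]; exact w⟩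
  quasiIso := ⟨fun n => by
    cases n with
    | zero =>
      rw [ChainComplex.quasiIsoAt₀_iff, ShortComplex.quasiIso_iff_of_zeros']
      · refine (ShortComplex.exact_and_epi_g_iff_of_iso ?_).2
          ⟨hex, by dsimp; infer_instance⟩
        exact ShortComplex.isoMk (Iso.refl _) (Iso.refl _) (Iso.refl _)
          (by simp [TTofComplex]; exact (Category.id_comp _).trans (Category.comp_id _).symm)
          (by simp; erw [ChainComplex.toSingle₀Equiv_symm_apply_f_zero]; exact (Category.id_comp _).trans (Category.comp_id _).symm)
      all_goals rfl
    | succ n =>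
      rw [quasiIsoAt_iff_exactAt']
      · apply TTofComplex_exactAt_succ
      · apply ChainComplex.exactAt_succ_single_obj⟩

end Resolution

section Aux

variable {T : Set (ModuleCat.{u} R)}

lemma TT_homology_mem (hT : IsTorsionTheory R T) (S : ShortComplex (ModuleCat.{u} R))
    (h2 : S.X₂ ∈ T) : S.homology ∈ T := by
  refine hT.mem_of_iso S.moduleCatHomologyIso.symm ?_
  exact hT.quotient_mem (hT.submodule_mem h2 (LinearMap.ker S.g.hom)) _

lemma TT_prod_mem (hT : IsTorsionTheory R T) {A B : Type u} [AddCommGroup A] [Module R A]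
    [AddCommGroup B] [Module R B] (hA : ModuleCat.of R A ∈ T) (hB : ModuleCat.of R B ∈ T) :
    ModuleCat.of R (A × B) ∈ T := by
  refine hT.ext_mem (N := ModuleCat.of R (A × B)) (Submodule.fst R A B) ?_ ?_
  · exact hT.mem_of_iso (Submodule.fstEquiv R A B).symm.toModuleIso hA
  · exact hT.mem_of_iso
      (LinearMap.quotKerEquivOfSurjective (LinearMap.snd R A B)
        (fun b => ⟨(0, b), rfl⟩)).symm.toModuleIso hB

lemma TT_pi_mem (hT : IsTorsionTheory R T) {M : Type u} [AddCommGroup M] [Module R M]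
    (hM : ModuleCat.of R M ∈ T) : ∀ n : ℕ, ModuleCat.of R (Fin n → M) ∈ T
  | 0 => by
    refine hT.mem_of_iso (N := ModuleCat.of R (⊥ : Submodule R M)) ?_
      (hT.submodule_mem hM ⊥)
    exact (LinearEquiv.ofSubsingleton _ _).toModuleIso
  | n + 1 => by
    have e : (Fin (n + 1) → M) ≃ₗ[R] M × (Fin n → M) :=
      { (Fin.consEquiv (fun _ : Fin (n + 1) => M)).symm with
        map_add' := fun _ _ => rfl
        map_smul' := fun _ _ => rfl }
    exact hT.mem_of_iso e.symm.toModuleIso (TT_prod_mem hT hM (TT_pi_mem hT hM n))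

end Aux

/-- **Theorem.** Let `𝔗` be a torsion theory, `𝔞` a finitely generated ideal of `R` and
`M ∈ 𝔗`. Then `Ext¹_R(R/𝔞, M) ∈ 𝔗`. -/
theorem ext_one_mem_of_mem (T : Set (ModuleCat.{u} R)) (hT : IsTorsionTheory R T)
    (a : Ideal R) (ha : a.FG) (M : Type u) [AddCommGroup M] [Module R M]
    (hM : ModuleCat.of R M ∈ T) :
    ((Ext R (ModuleCat.{u} R) 1).obj (Opposite.op (ModuleCat.of R (R ⧸ a)))).obj
      (ModuleCat.of R M) ∈ T := by
  obtain ⟨s, hs⟩ := ha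
  set n := s.card with hn
  set v : Fin n → R := fun i => (s.equivFin.symm i : R) with hv
  have hrange : Set.range v = (s : Set R) := by
    ext x
    constructor
    · rintro ⟨i, rfl⟩; exact (s.equivFin.symm i).2
    · intro hx; exact ⟨s.equivFin ⟨x, hx⟩, by simp [hv]⟩
  -- the objects
  set P₀ : ModuleCat.{u} R := ModuleCat.of R R with hP₀
  set P₁ : ModuleCat.{u} R := ModuleCat.of R (Fin n → R) with hP₁
  set Z : ModuleCat.{u} R := ModuleCat.of R (R ⧸ a) with hZ
  letI : Projective P₀ :=
    ModuleCat.projective_of_free (Module.Basis.singleton (Fin 1) R)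
  letI : Projective P₁ :=
    ModuleCat.projective_of_free (Pi.basisFun R (Fin n))
  set π : P₀ ⟶ Z := ModuleCat.ofHom a.mkQ with hπ
  set d₁ : P₁ ⟶ P₀ := ModuleCat.ofHom (Fintype.linearCombination R v) with hd₁
  haveI : Epi π := (ModuleCat.epi_iff_surjective π).2 (Submodule.mkQ_surjective a)
  have hranged : LinearMap.range (Fintype.linearCombination R v) = a := by
    rw [Fintype.range_linearCombination, hrange]; exact hs
  have w : d₁ ≫ π = 0 := by
    refine ModuleCat.hom_ext (LinearMap.ext fun x => ?_)
    have : (Fintype.linearCombination R v) x ∈ a := by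
      rw [← hranged]; exact ⟨x, rfl⟩
    exact (Submodule.Quotient.mk_eq_zero a).2 this
  have hex : (ShortComplex.mk d₁ π w).Exact := by
    rw [ShortComplex.moduleCat_exact_iff_range_eq_ker]
    show LinearMap.range (Fintype.linearCombination R v) = LinearMap.ker a.mkQ
    rw [hranged, Submodule.ker_mkQ]
  let P : ProjectiveResolution Z := TTresolution π d₁ w hex
  refine hT.mem_of_iso (P.isoExt 1 (ModuleCat.of R M)).symm ?_
  refine TT_homology_mem hT _ ?_
  show ModuleCat.of R (P₁ ⟶ ModuleCat.of R M) ∈ T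
  have e : (Fin n → M) ≃ₗ[R] ((Fin n → R) →ₗ[R] M) :=
    (LinearEquiv.piCongrRight fun _ : Fin n =>
      (LinearMap.ringLmapEquivSelf R R M).symm).trans
      (LinearMap.lsum R (fun _ : Fin n => R) R)
  exact hT.mem_of_iso (e.trans (ModuleCat.homLinearEquiv (S := R) (M := P₁) (N := ModuleCat.of R M)).symm).toModuleIso (TT_pi_mem hT hM n)
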